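/- Let f : ℂ → ℂ be the cubic polynomial f(z) = z³ − (3/4)z + (√7/4)i. The critical points of f (the roots of f′(z) = 3z² − 3/4) are 1/2 and −1/2. Moreover f(1/2) = (−1 + i√7)/4, f((−1 + i√7)/4) = 1/2, f(−1/2) = (1 + i√7)/4, and f((1 + i√7)/4) = −1/2. Hence each critical point of f is periodic of period 2, and the post-critical set of f equals {1/2, −1/2, (−1 + i√7)/4, (1 + i√7)/4}, a set with exactly four elements. -/
import Mathlib

lemma orbit_two_cycle {f : ℂ → ℂ} {x : ℂ} (h : f (f x) = x) :
    Set.range (fun k : ℕ => f^[k] x) = {x, f x} := by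
  apply Set.Subset.antisymm
  · rintro _ ⟨k, rfl⟩
    induction k using Nat.twoStepInduction with
    | zero => left; rfl
    | one => right; rfl
    | more n ih _ =>
      show f^[n + 2] x ∈ _
      rw [show n + 2 = n + 1 + 1 by ring, Function.iterate_succ_apply,
        Function.iterate_succ_apply, h]
      exact ih
  · rintro y (rfl | rfl)
    · exact ⟨0, rfl⟩
    · exact ⟨1, rfl⟩

/-- Let `f z = z³ - (3/4) z + (√7/4) i`.  The critical points of `f` (the
roots of `f' z = 3 z² - 3/4`) are `1/2` and `-1/2`.  Moreover `f (1/2) = (-1 + i√7)/4`,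
`f ((-1 + i√7)/4) = 1/2`, `f (-1/2) = (1 + i√7)/4` and `f ((1 + i√7)/4) = -1/2`.  Hence each
critical point of `f` is periodic of period 2, and the post-critical set of `f` (the union of
the forward orbits of the critical values) equals
`{1/2, -1/2, (-1 + i√7)/4, (1 + i√7)/4}`, a set with exactly four elements. -/
theorem cubic_rabbit_postcritical (f : ℂ → ℂ)
    (hf : ∀ z, f z = z ^ 3 - (3 / 4) * z + ((Real.sqrt 7 : ℂ) / 4) * Complex.I) :
    ({z : ℂ | 3 * z ^ 2 - 3 / 4 = 0} = {1 / 2, -(1 / 2)}) ∧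
    f (1 / 2) = (-1 + (Real.sqrt 7 : ℂ) * Complex.I) / 4 ∧
    f ((-1 + (Real.sqrt 7 : ℂ) * Complex.I) / 4) = 1 / 2 ∧
    f (-(1 / 2)) = (1 + (Real.sqrt 7 : ℂ) * Complex.I) / 4 ∧
    f ((1 + (Real.sqrt 7 : ℂ) * Complex.I) / 4) = -(1 / 2) ∧
    f^[2] (1 / 2) = 1 / 2 ∧
    f^[2] (-(1 / 2)) = -(1 / 2) ∧
    ((Set.range fun k : ℕ => f^[k] (f (1 / 2))) ∪
        (Set.range fun k : ℕ => f^[k] (f (-(1 / 2)))) =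
      {1 / 2, -(1 / 2), (-1 + (Real.sqrt 7 : ℂ) * Complex.I) / 4,
        (1 + (Real.sqrt 7 : ℂ) * Complex.I) / 4}) ∧
    ({1 / 2, -(1 / 2), (-1 + (Real.sqrt 7 : ℂ) * Complex.I) / 4,
        (1 + (Real.sqrt 7 : ℂ) * Complex.I) / 4} : Set ℂ).ncard = 4 := by
  have hs : ((Real.sqrt 7 : ℝ) : ℂ) ^ 2 = 7 := by
    norm_cast
    exact Real.sq_sqrt (by norm_num)
  have hI : Complex.I ^ 2 = -1 := Complex.I_sq
  set s : ℂ := ((Real.sqrt 7 : ℝ) : ℂ) with hsdef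
  have hspos : (Real.sqrt 7 : ℝ) > 0 := Real.sqrt_pos.mpr (by norm_num)
  have h1 : f (1 / 2) = (-1 + s * Complex.I) / 4 := by
    rw [hf]; ring_nf
  have h2 : f ((-1 + s * Complex.I) / 4) = 1 / 2 := by
    rw [hf]
    linear_combination ((s ^ 3 * Complex.I - 3 * s ^ 2) / 64) * hI +
      ((3 - s * Complex.I) / 64) * hs
  have h3 : f (-(1 / 2)) = (1 + s * Complex.I) / 4 := by
    rw [hf]; ring_nf
  have h4 : f ((1 + s * Complex.I) / 4) = -(1 / 2) := by
    rw [hf]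
    linear_combination ((3 * s ^ 2 + s ^ 3 * Complex.I) / 64) * hI +
      ((-3 - s * Complex.I) / 64) * hs
  have hcrit : {z : ℂ | 3 * z ^ 2 - 3 / 4 = 0} = {1 / 2, -(1 / 2)} := by
    ext z
    simp only [Set.mem_setOf_eq, Set.mem_insert_iff, Set.mem_singleton_iff]
    constructor
    · intro h
      have : (z - 1 / 2) * (z + 1 / 2) = 0 := by linear_combination h / 3
      rcases mul_eq_zero.mp this with h | h
      · left; linear_combination h
      · right; linear_combination h
    · rintro (rfl | rfl) <;> ring
  have hp1 : f^[2] (1 / 2) = 1 / 2 := by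
    simp only [Function.iterate_succ, Function.iterate_zero, Function.comp_apply, id_eq]
    rw [h1, h2]
  have hp2 : f^[2] (-(1 / 2)) = -(1 / 2) := by
    simp only [Function.iterate_succ, Function.iterate_zero, Function.comp_apply, id_eq]
    rw [h3, h4]
  have ho1 : Set.range (fun k : ℕ => f^[k] (f (1 / 2))) = {(-1 + s * Complex.I) / 4, 1 / 2} := by
    rw [h1, orbit_two_cycle (by rw [h2, h1]), h2]
  have ho2 : Set.range (fun k : ℕ => f^[k] (f (-(1 / 2)))) = {(1 + s * Complex.I) / 4, -(1 / 2)} := by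
    rw [h3, orbit_two_cycle (by rw [h4, h3]), h4]
  refine ⟨hcrit, h1, h2, h3, h4, hp1, hp2, ?_, ?_⟩
  · rw [ho1, ho2]
    ext z
    simp only [Set.mem_union, Set.mem_insert_iff, Set.mem_singleton_iff]
    tauto
  · have hsne : s ≠ 0 := by
      simpa [hsdef, Complex.ext_iff] using ne_of_gt hspos
    have him : (((-1 + s * Complex.I) / 4) : ℂ).im ≠ 0 := by
      simp [hsdef, Complex.div_im]
    have him2 : (((1 + s * Complex.I) / 4) : ℂ).im ≠ 0 := by
      simp [hsdef, Complex.div_im]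
    have e1 : (1 / 2 : ℂ) ≠ -(1 / 2) := by norm_num
    have e2 : (1 / 2 : ℂ) ≠ (-1 + s * Complex.I) / 4 := by
      intro h; apply him; rw [← h]; norm_num
    have e3 : (1 / 2 : ℂ) ≠ (1 + s * Complex.I) / 4 := by
      intro h; apply him2; rw [← h]; norm_num
    have e4 : (-(1 / 2) : ℂ) ≠ (-1 + s * Complex.I) / 4 := by
      intro h; apply him; rw [← h]; norm_num
    have e5 : (-(1 / 2) : ℂ) ≠ (1 + s * Complex.I) / 4 := by
      intro h; apply him2; rw [← h]; norm_num
    have e6 : ((-1 + s * Complex.I) / 4 : ℂ) ≠ (1 + s * Complex.I) / 4 := by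
      intro h
      have : (((-1 + s * Complex.I) / 4 : ℂ)).re = (((1 + s * Complex.I) / 4 : ℂ)).re := by rw [h]
      simp [Complex.div_re, hsdef] at this
      linarith
    rw [Set.ncard_insert_of_notMem
          (by simp only [Set.mem_insert_iff, Set.mem_singleton_iff]; push_neg
              exact ⟨e1, e2, e3⟩),
        Set.ncard_insert_of_notMem
          (by simp only [Set.mem_insert_iff, Set.mem_singleton_iff]; push_neg
              exact ⟨e4, e5⟩),
        Set.ncard_pair e6]
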